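/- Let $1<p,q<\infty$ and let $\omega, v$ be weights on $\mathbb{R}^n$. Let $r > 1$ and suppose the reverse Hölder inequalities $\big(\frac{1}{|Q|}\int_Q \omega^{qr}\big)^{1/r} \le C_1 \frac{1}{|Q|}\int_Q \omega^q$ and $\big(\frac{1}{|Q|}\int_Q \omega^{-p'r}\big)^{1/r} \le C_2 \frac{1}{|Q|}\int_Q \omega^{-p'}$ hold for all cubes $Q$. Then for any measurable $b$ and real $s$, $[e^{sb}\omega]_{A_{p,q}} \le C_1 C_2^{q/p'}\, [\omega]_{A_{p,q}}\, [e^{r'sb}]_{A_{p,q}}^{1/r'}$, where $r' = r/(r-1)$. -/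

import Mathlib

open MeasureTheory ENNReal Real

noncomputable section

/-- The axis-parallel cube with center `c` and side length `h`. -/
def cube (n : ℕ) (c : Fin n → ℝ) (h : ℝ) : Set (Fin n → ℝ) :=
  {x | ∀ i, |x i - c i| ≤ h / 2}

/-- Average of an `ℝ≥0∞`-valued function over a set. -/
def eavg (n : ℕ) (w : (Fin n → ℝ) → ℝ≥0∞) (Q : Set (Fin n → ℝ)) : ℝ≥0∞ :=
  (volume Q)⁻¹ * ∫⁻ x in Q, w x

/-- The `A_{p,q}` constant `[ω]_{A_{p,q}} = sup_Q (⨍_Q ω^q)(⨍_Q ω^{-p'})^{q/p'}`. -/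
def apqConst (n : ℕ) (p q : ℝ) (w : (Fin n → ℝ) → ℝ≥0∞) : ℝ≥0∞ :=
  ⨆ (c : Fin n → ℝ) (h : {h : ℝ // 0 < h}),
    eavg n (fun x => w x ^ q) (cube n c h) *
      (eavg n (fun x => w x ^ (-(p / (p - 1)))) (cube n c h)) ^ (q / (p / (p - 1)))

lemma cube_eq_pi (n : ℕ) (c : Fin n → ℝ) (h : ℝ) :
    cube n c h = Set.pi Set.univ fun i => Set.Icc (c i - h/2) (c i + h/2) := by
  ext x
  simp only [cube, Set.mem_setOf_eq, Set.mem_pi, Set.mem_univ, forall_true_left, Set.mem_Icc,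
    abs_le]
  refine forall_congr' fun i => ⟨fun ⟨h1, h2⟩ => ⟨by linarith, by linarith⟩,
    fun ⟨h1, h2⟩ => ⟨by linarith, by linarith⟩⟩

lemma volume_cube (n : ℕ) (c : Fin n → ℝ) (h : ℝ) :
    volume (cube n c h) = ENNReal.ofReal h ^ n := by
  rw [cube_eq_pi, volume_pi_pi]
  have : ∀ i : Fin n, volume (Set.Icc (c i - h/2) (c i + h/2)) = ENNReal.ofReal h := by
    intro i; rw [Real.volume_Icc]; ring_nf
  simp [this, Finset.prod_const]

lemma ofReal_exp_rpow (t u : ℝ) :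
    (ENNReal.ofReal (Real.exp t)) ^ u = ENNReal.ofReal (Real.exp (t * u)) := by
  rw [ENNReal.ofReal_rpow_of_pos (Real.exp_pos t), Real.rpow_def_of_pos (Real.exp_pos t),
    Real.log_exp]

lemma ofReal_exp_mul_rpow (t : ℝ) (x : ℝ≥0∞) (z : ℝ) :
    (ENNReal.ofReal (Real.exp t) * x) ^ z = ENNReal.ofReal (Real.exp (t * z)) * x ^ z := by
  rw [ENNReal.mul_rpow_eq_ite, if_neg, ofReal_exp_rpow]
  rintro ⟨(⟨h1, -⟩ | ⟨h1, -⟩), -⟩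
  · exact absurd h1 (by simp [Real.exp_pos t])
  · exact absurd h1 ENNReal.ofReal_ne_top

lemma eavg_holder {n : ℕ} {Q : Set (Fin n → ℝ)} (hQ0 : volume Q ≠ 0) (hQt : volume Q ≠ ⊤)
    {r r' : ℝ} (hrr : r.HolderConjugate r') {f g : (Fin n → ℝ) → ℝ≥0∞}
    (hf : Measurable f) (hg : Measurable g) :
    eavg n (fun x => f x * g x) Q ≤
      (eavg n (fun x => f x ^ r) Q) ^ (1/r) * (eavg n (fun x => g x ^ r') Q) ^ (1/r') := by
  have hH := ENNReal.lintegral_mul_le_Lp_mul_Lq (volume.restrict Q) hrr hf.aemeasurable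
    hg.aemeasurable
  simp only [Pi.mul_apply] at hH
  have hv : (volume Q)⁻¹ = ((volume Q)⁻¹) ^ (1/r) * ((volume Q)⁻¹) ^ (1/r') := by
    rw [← ENNReal.rpow_add _ _ (by simp [hQt]) (by simp [hQ0])]
    rw [one_div, one_div, hrr.inv_add_inv_eq_one, ENNReal.rpow_one]
  unfold eavg
  calc (volume Q)⁻¹ * ∫⁻ x in Q, f x * g x
      ≤ (volume Q)⁻¹ * ((∫⁻ x in Q, f x ^ r) ^ (1/r) * (∫⁻ x in Q, g x ^ r') ^ (1/r')) := by
        gcongr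
    _ = ((volume Q)⁻¹ * ∫⁻ x in Q, f x ^ r) ^ (1/r) *
        ((volume Q)⁻¹ * ∫⁻ x in Q, g x ^ r') ^ (1/r') := by
        rw [ENNReal.mul_rpow_of_nonneg _ _ hrr.one_div_nonneg,
          ENNReal.mul_rpow_of_nonneg _ _ hrr.symm.one_div_nonneg]
        conv_lhs => rw [hv]
        ring

lemma eavg_step {n : ℕ} {Q : Set (Fin n → ℝ)} (hQ0 : volume Q ≠ 0) (hQt : volume Q ≠ ⊤)
    {ω : (Fin n → ℝ) → ℝ≥0∞} (hω : Measurable ω)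
    {b : (Fin n → ℝ) → ℝ} (hb : Measurable b) (s : ℝ)
    {r r' : ℝ} (hrr : r.HolderConjugate r') (a : ℝ) :
    eavg n (fun x => (ENNReal.ofReal (Real.exp (s * b x)) * ω x) ^ a) Q ≤
      (eavg n (fun x => ω x ^ (a * r)) Q) ^ (1/r) *
      (eavg n (fun x => (ENNReal.ofReal (Real.exp (r' * s * b x))) ^ a) Q) ^ (1/r') := by
  have e1 : (fun x => (ENNReal.ofReal (Real.exp (s * b x)) * ω x) ^ a)
      = fun x => (ω x ^ a) * ENNReal.ofReal (Real.exp (s * b x * a)) := by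
    funext x; rw [ofReal_exp_mul_rpow, mul_comm]
  have e2 : (fun x => (ω x ^ a) ^ r) = fun x => ω x ^ (a * r) := by
    funext x; rw [← ENNReal.rpow_mul]
  have e3 : (fun x => (ENNReal.ofReal (Real.exp (s * b x * a))) ^ r')
      = fun x => (ENNReal.ofReal (Real.exp (r' * s * b x))) ^ a := by
    funext x; rw [ofReal_exp_rpow, ofReal_exp_rpow]; ring_nf
  have hmg : Measurable fun x => ENNReal.ofReal (Real.exp (s * b x * a)) :=
    ENNReal.measurable_ofReal.comp (Real.measurable_exp.comp ((hb.const_mul s).mul_const a))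
  have hmf : Measurable fun x => ω x ^ a :=
    hω.pow (measurable_const : Measurable fun _ : (Fin n → ℝ) => a)
  have := eavg_holder hQ0 hQt hrr hmf hmg
  rw [e1, ← e2, ← e3]
  exact this

/-- under reverse Hölder inequalities for `ω^q` and `ω^{-p'}` with exponent `r`,
`[e^{sb}ω]_{A_{p,q}} ≤ C₁ C₂^{q/p'} [ω]_{A_{p,q}} [e^{r'sb}]_{A_{p,q}}^{1/r'}`. -/
theorem apq_perturbation
    (n : ℕ) (p q : ℝ) (hp : 1 < p) (hq : 1 < q)
    (ω : (Fin n → ℝ) → ℝ≥0∞) (hω : Measurable ω)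
    (b : (Fin n → ℝ) → ℝ) (hb : Measurable b) (s : ℝ)
    (r : ℝ) (hr : 1 < r) (C₁ C₂ : ℝ) (hC₁ : 0 < C₁) (hC₂ : 0 < C₂)
    (hRH1 : ∀ (c : Fin n → ℝ) (h : ℝ), 0 < h →
      (eavg n (fun x => ω x ^ (q * r)) (cube n c h)) ^ (1 / r) ≤
        ENNReal.ofReal C₁ * eavg n (fun x => ω x ^ q) (cube n c h))
    (hRH2 : ∀ (c : Fin n → ℝ) (h : ℝ), 0 < h →
      (eavg n (fun x => ω x ^ (-(p / (p - 1)) * r)) (cube n c h)) ^ (1 / r) ≤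
        ENNReal.ofReal C₂ * eavg n (fun x => ω x ^ (-(p / (p - 1)))) (cube n c h)) :
    apqConst n p q (fun x => ENNReal.ofReal (Real.exp (s * b x)) * ω x) ≤
      ENNReal.ofReal C₁ * (ENNReal.ofReal C₂) ^ (q / (p / (p - 1))) *
        apqConst n p q ω *
        (apqConst n p q (fun x => ENNReal.ofReal (Real.exp ((r / (r - 1)) * s * b x))))
          ^ (1 / (r / (r - 1))) := by
  have hrr : r.HolderConjugate (r / (r - 1)) :=
    (Real.holderConjugate_iff_eq_conjExponent hr).2 rfl
  set r' : ℝ := r / (r - 1) with hr'def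
  set e : ℝ := q / (p / (p - 1)) with hedef
  have hp1 : (0:ℝ) < p - 1 := by linarith
  have hpp : (0:ℝ) < p / (p - 1) := by positivity
  have he : 0 ≤ e := le_of_lt (by rw [hedef]; positivity)
  have h1r' : (0:ℝ) ≤ 1 / r' := hrr.symm.one_div_nonneg
  rw [apqConst]
  refine iSup_le fun c => iSup_le fun hh => ?_
  obtain ⟨h, hh0⟩ := hh
  set Q : Set (Fin n → ℝ) := cube n c h with hQdef
  have hQvol : volume Q = ENNReal.ofReal h ^ n := volume_cube n c h
  have hQ0 : volume Q ≠ 0 := by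
    rw [hQvol]
    exact pow_ne_zero _ (by simp [ENNReal.ofReal_eq_zero, hh0])
  have hQt : volume Q ≠ ⊤ := by
    rw [hQvol]
    exact ENNReal.pow_ne_top ENNReal.ofReal_ne_top
  set A1 := eavg n (fun x => ω x ^ q) Q with hA1
  set A2 := eavg n (fun x => ω x ^ (-(p / (p - 1)))) Q with hA2
  set E1 := eavg n (fun x => (ENNReal.ofReal (Real.exp (r' * s * b x))) ^ q) Q with hE1
  set E2 := eavg n (fun x => (ENNReal.ofReal (Real.exp (r' * s * b x))) ^ (-(p / (p - 1)))) Q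
    with hE2
  have h1 : eavg n (fun x => (ENNReal.ofReal (Real.exp (s * b x)) * ω x) ^ q) Q ≤
      ENNReal.ofReal C₁ * A1 * E1 ^ (1/r') := by
    calc eavg n (fun x => (ENNReal.ofReal (Real.exp (s * b x)) * ω x) ^ q) Q
        ≤ (eavg n (fun x => ω x ^ (q * r)) Q) ^ (1/r) * E1 ^ (1/r') :=
          eavg_step hQ0 hQt hω hb s hrr q
      _ ≤ (ENNReal.ofReal C₁ * A1) * E1 ^ (1/r') := by
          gcongr
          exact hRH1 c h hh0
      _ = ENNReal.ofReal C₁ * A1 * E1 ^ (1/r') := rfl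
  have h2 : eavg n (fun x => (ENNReal.ofReal (Real.exp (s * b x)) * ω x) ^ (-(p / (p - 1)))) Q ≤
      ENNReal.ofReal C₂ * A2 * E2 ^ (1/r') := by
    calc eavg n (fun x => (ENNReal.ofReal (Real.exp (s * b x)) * ω x) ^ (-(p / (p - 1)))) Q
        ≤ (eavg n (fun x => ω x ^ (-(p / (p - 1)) * r)) Q) ^ (1/r) * E2 ^ (1/r') :=
          eavg_step hQ0 hQt hω hb s hrr (-(p / (p - 1)))
      _ ≤ (ENNReal.ofReal C₂ * A2) * E2 ^ (1/r') := by
          gcongr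
          exact hRH2 c h hh0
      _ = ENNReal.ofReal C₂ * A2 * E2 ^ (1/r') := rfl
  have hsup1 : A1 * A2 ^ e ≤ apqConst n p q ω :=
    le_iSup_of_le c (le_iSup_of_le ⟨h, hh0⟩ le_rfl)
  have hsup2 : E1 * E2 ^ e ≤
      apqConst n p q (fun x => ENNReal.ofReal (Real.exp (r' * s * b x))) :=
    le_iSup_of_le c (le_iSup_of_le ⟨h, hh0⟩ le_rfl)
  calc eavg n (fun x => (ENNReal.ofReal (Real.exp (s * b x)) * ω x) ^ q) Q *
        (eavg n (fun x => (ENNReal.ofReal (Real.exp (s * b x)) * ω x) ^ (-(p / (p - 1)))) Q) ^ e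
      ≤ (ENNReal.ofReal C₁ * A1 * E1 ^ (1/r')) * (ENNReal.ofReal C₂ * A2 * E2 ^ (1/r')) ^ e := by
        gcongr
    _ = ENNReal.ofReal C₁ * (ENNReal.ofReal C₂) ^ e * (A1 * A2 ^ e) *
        ((E1 * E2 ^ e) ^ (1/r')) := by
        rw [ENNReal.mul_rpow_of_nonneg _ _ he, ENNReal.mul_rpow_of_nonneg _ _ he,
          ENNReal.mul_rpow_of_nonneg E1 _ h1r', ← ENNReal.rpow_mul E2, ← ENNReal.rpow_mul E2,
          mul_comm e (1/r')]
        ring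
    _ ≤ ENNReal.ofReal C₁ * (ENNReal.ofReal C₂) ^ e * apqConst n p q ω *
        ((apqConst n p q (fun x => ENNReal.ofReal (Real.exp (r' * s * b x)))) ^ (1/r')) := by
        gcongr


end
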